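/- Multiset rewriting soundness and completeness of the small sequent system: for multisets M, M1, M2 of atoms, the sequent (M1 ↦ M2) ⊢ M has a derivation from the open premise ⊢ N (using right rules for 1 and ×, init, left rules for 1, ×, and ↦) if and only if there is a multiset M'' with M = M1 ⊎ M'' and N = M2 ⊎ M''. -/

import Mathlib

/-- Expressions of the small system: atoms, the unit `1`, and `×`. -/
inductive SE (α : Type) : Type
  | atom : α → SE α
  | one : SE α
  | times : SE α → SE α → SE α

/-- The multiset of atoms represented by an expression. -/
def SE.toMS {α : Type} : SE α → Multiset α
  | .atom a => {a}
  | .one => 0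
  | .times e1 e2 => e1.toMS + e2.toMS

/-- Left-hand formulas of the small system: expressions and rewrite rules
`E1 ↦ E2`. -/
inductive SR (α : Type) : Type
  | expr : SE α → SR α
  | mapsto : SE α → SE α → SR α

/-- Derivability in the small sequent system, from the open premise `⊢ N`
(for `N` a multiset of atoms).  The left-hand side holds at most one formula. -/
inductive SDer {α : Type} (N : Multiset α) : Option (SR α) → Multiset (SE α) → Prop
  /-- The open premise `⊢ N`. -/
  | hyp : SDer N none (N.map SE.atom)
  /-- Right rule for `1`. -/
  | rone {Δ} : SDer N none Δ → SDer N none (.one ::ₘ Δ)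
  /-- Right rule for `×`. -/
  | rtimes {Δ E1 E2} : SDer N none (E1 ::ₘ E2 ::ₘ Δ) →
      SDer N none ((E1.times E2) ::ₘ Δ)
  /-- The `init` rule `E ⊢ E`. -/
  | init {E} : SDer N (some (.expr E)) {E}
  /-- Left rule for `1`, with empty right-hand side. -/
  | lone : SDer N (some (.expr .one)) 0
  /-- Left rule for `×`. -/
  | ltimes {E1 E2 Δ1 Δ2} : SDer N (some (.expr E1)) Δ1 →
      SDer N (some (.expr E2)) Δ2 →
      SDer N (some (.expr (E1.times E2))) (Δ1 + Δ2)
  /-- Left rule for `↦`. -/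
  | lmapsto {E1 E2 Δ1 Δ2} : SDer N (some (.expr E1)) Δ1 →
      SDer N none (E2 ::ₘ Δ2) →
      SDer N (some (.mapsto E1 E2)) (Δ1 + Δ2)

lemma sder_expr_sum {α : Type} {N : Multiset α} {o : Option (SR α)}
    {Δ : Multiset (SE α)} (h : SDer N o Δ) :
    ∀ E, o = some (SR.expr E) → (Δ.map SE.toMS).sum = E.toMS := by
  induction h with
  | hyp => intro E h; cases h
  | rone _ _ => intro E h; cases h
  | rtimes _ _ => intro E h; cases h
  | init => intro E h; cases h; simp
  | lone => intro E h; cases h; simp [SE.toMS]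
  | ltimes _ _ ih1 ih2 =>
      intro E h; cases h; simp [SE.toMS, ih1 _ rfl, ih2 _ rfl]
  | lmapsto _ _ _ _ => intro E h; cases h

lemma sder_none_sum {α : Type} {N : Multiset α} {o : Option (SR α)}
    {Δ : Multiset (SE α)} (h : SDer N o Δ) :
    o = none → (Δ.map SE.toMS).sum = N := by
  induction h with
  | hyp => intro; simp [Multiset.map_map, Function.comp_def, SE.toMS]
  | rone _ ih => intro; simp [SE.toMS, ih rfl]
  | rtimes _ ih => intro; simpa [SE.toMS, add_assoc] using ih rfl
  | init => intro h; cases h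
  | lone => intro h; cases h
  | ltimes _ _ _ _ => intro h; cases h
  | lmapsto _ _ _ _ => intro h; cases h

lemma sder_expr_self {α : Type} (N : Multiset α) (E : SE α) :
    SDer N (some (SR.expr E)) (E.toMS.map SE.atom) := by
  induction E with
  | atom a => simpa [SE.toMS] using SDer.init (N := N) (E := SE.atom a)
  | one => simpa [SE.toMS] using SDer.lone (N := N)
  | times E1 E2 ih1 ih2 => simpa [SE.toMS] using SDer.ltimes ih1 ih2

lemma sder_cons_expr {α : Type} {N : Multiset α} (E : SE α) :
    ∀ (Δ : Multiset (SE α)), SDer N none (E.toMS.map SE.atom + Δ) →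
      SDer N none (E ::ₘ Δ) := by
  induction E with
  | atom a => intro Δ h; simpa [SE.toMS] using h
  | one => intro Δ h; exact SDer.rone (by simpa [SE.toMS] using h)
  | times E1 E2 ih1 ih2 =>
      intro Δ h
      apply SDer.rtimes
      apply ih1
      have : SDer N none (E2 ::ₘ (Multiset.map SE.atom E1.toMS + Δ)) := by
        apply ih2
        have e : Multiset.map SE.atom E2.toMS + (Multiset.map SE.atom E1.toMS + Δ)
            = Multiset.map SE.atom (E1.times E2).toMS + Δ := by
          simp [SE.toMS, add_assoc]; rw [add_left_comm]
        rw [e]; exact h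
      have e2 : (E2 ::ₘ (Multiset.map SE.atom E1.toMS + Δ))
          = Multiset.map SE.atom E1.toMS + (E2 ::ₘ Δ) := by
        rw [← Multiset.singleton_add, ← Multiset.singleton_add, add_left_comm]
      rwa [e2] at this

lemma atoms_eq {α : Type} : ∀ (Δ : Multiset (SE α)),
    (∀ x ∈ Δ, ∃ a, x = SE.atom a) →
    Δ = ((Δ.map SE.toMS).sum).map SE.atom := by
  intro Δ
  induction Δ using Multiset.induction with
  | empty => simp
  | cons x s ih =>
      intro h
      obtain ⟨a, rfl⟩ := h x (Multiset.mem_cons_self _ _)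
      have := ih (fun y hy => h y (Multiset.mem_cons_of_mem hy))
      conv_lhs => rw [this]
      simp [SE.toMS]

/-- Soundness and completeness of the small sequent system for multiset
rewriting: for multisets `M, M1, M2` of atoms, the sequent `(M1 ↦ M2) ⊢ M`
has a derivation from the open premise `⊢ N` iff there is a multiset `M''`
with `M = M1 ⊎ M''` and `N = M2 ⊎ M''`. -/
theorem small_system_rewrites {α : Type} (M M1 M2 N : Multiset α)
    (E1 E2 : SE α) (h1 : E1.toMS = M1) (h2 : E2.toMS = M2) :
    SDer N (some (SR.mapsto E1 E2)) (M.map SE.atom) ↔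
      ∃ M'' : Multiset α, M = M1 + M'' ∧ N = M2 + M'' := by
  constructor
  · intro h
    generalize hΔ : (M.map SE.atom) = Δ at h
    cases h with
    | @lmapsto _ _ Δ1 Δ2 hd1 hd2 =>
      have hat : ∀ x ∈ Δ1 + Δ2, ∃ a, x = SE.atom a := by
        rw [← hΔ]; intro x hx
        obtain ⟨a, _, rfl⟩ := Multiset.mem_map.mp hx
        exact ⟨a, rfl⟩
      have h1' : Δ1 = ((Δ1.map SE.toMS).sum).map SE.atom :=
        atoms_eq Δ1 (fun x hx => hat x (Multiset.mem_add.mpr (Or.inl hx)))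
      have h2' : Δ2 = ((Δ2.map SE.toMS).sum).map SE.atom :=
        atoms_eq Δ2 (fun x hx => hat x (Multiset.mem_add.mpr (Or.inr hx)))
      refine ⟨(Δ2.map SE.toMS).sum, ?_, ?_⟩
      · have : Δ1 + Δ2 = (M1 + (Δ2.map SE.toMS).sum).map SE.atom := by
          rw [Multiset.map_add]
          rw [sder_expr_sum hd1 E1 rfl, h1] at h1'
          rw [← h1', ← h2']
        rw [this] at hΔ
        exact Multiset.map_injective (fun a b => SE.atom.inj) hΔ
      · have := sder_none_sum hd2 rfl
        simp only [Multiset.map_cons, Multiset.sum_cons] at this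
        rw [h2] at this
        exact this.symm
  · rintro ⟨M'', rfl, rfl⟩
    have hd2 : SDer (M2 + M'') none (E2 ::ₘ M''.map SE.atom) := by
      apply sder_cons_expr (N := M2 + M'')
      rw [h2, ← Multiset.map_add]
      exact SDer.hyp
    have := SDer.lmapsto (sder_expr_self _ E1) hd2
    rw [h1, ← Multiset.map_add] at this
    exact this
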